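/- arXiv:1406.3782 — 2 statements merged into one kernel-verified Lean document; each statement's English description precedes it below -/
import Mathlib

section
/- Let m(m̂) = (ρ² m̂ /(1+m̂)) ∫ Dz z² [ (1−ρ)(1+m̂)^{1/2} e^{−(m̂/2)z²} + ρ ]^{−1} for 0 < ρ < 1. Then m̂ (ρ − m(m̂)) → ρ as m̂ → ∞; that is, m(m̂) = ρ(1 − m̂^{−1}) + o(m̂^{−1}). -/
open MeasureTheory Real Filter

/-- Standard Gaussian density. -/
noncomputable def stdGauss (t : ℝ) : ℝ := Real.exp (-t ^ 2 / 2) / Real.sqrt (2 * Real.pi)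

lemma stdGauss_pos (t : ℝ) : 0 < stdGauss t := by
  unfold stdGauss; positivity

lemma continuous_stdGauss : Continuous stdGauss := by
  unfold stdGauss
  exact (Real.continuous_exp.comp (by continuity)).div_const _

noncomputable def gA (ρ mh z : ℝ) : ℝ :=
  (1 - ρ) * (1 + mh) ^ ((1:ℝ)/2) * Real.exp (-(mh/2) * z ^ 2)

lemma gA_pos {ρ : ℝ} (hρ1 : ρ < 1) {mh : ℝ} (hmh : 0 < mh) (z : ℝ) : 0 < gA ρ mh z := by
  unfold gA
  have h1 : (0:ℝ) < (1 + mh) ^ ((1:ℝ)/2) := Real.rpow_pos_of_pos (by linarith) _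
  have h2 : (0:ℝ) < 1 - ρ := by linarith
  positivity

lemma continuous_gA (ρ mh : ℝ) : Continuous (fun z => gA ρ mh z) := by
  unfold gA
  exact continuous_const.mul (Real.continuous_exp.comp (by continuity))

lemma u54 (u : ℝ) (hu : 0 ≤ u) : u ^ ((5:ℝ)/4) * Real.exp (-u) ≤ 4 := by
  rcases le_total u 1 with h | h
  · calc u ^ ((5:ℝ)/4) * Real.exp (-u) ≤ 1 * 1 := by
          gcongr
          · exact Real.rpow_le_one hu h (by norm_num)
          · exact Real.exp_le_one_iff.mpr (by linarith)
        _ ≤ 4 := by norm_num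
  · have h1 : u ^ ((5:ℝ)/4) ≤ u ^ (2:ℝ) :=
      Real.rpow_le_rpow_of_exponent_le h (by norm_num)
    have h2 : u ^ (2:ℝ) = u ^ 2 := by
      rw [show (2:ℝ) = ((2:ℕ):ℝ) by norm_num, Real.rpow_natCast]
    have h3 : u ^ 2 ≤ 4 * Real.exp u := by
      have := Real.add_one_le_exp (u/2)
      have h4 : Real.exp u = Real.exp (u/2) ^ 2 := by
        rw [← Real.exp_nat_mul]; ring_nf
      nlinarith [Real.exp_pos (u/2)]
    calc u ^ ((5:ℝ)/4) * Real.exp (-u) ≤ u ^ 2 * Real.exp (-u) := by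
          rw [← h2]; exact mul_le_mul_of_nonneg_right h1 (Real.exp_pos _).le
      _ ≤ 4 * Real.exp u * Real.exp (-u) := mul_le_mul_of_nonneg_right h3 (Real.exp_pos _).le
      _ = 4 := by rw [mul_assoc, ← Real.exp_add]; simp

lemma integrable_sq_gauss : Integrable (fun x : ℝ => x ^ 2 * Real.exp (-(1/2) * x ^ 2)) := by
  have h := integrable_rpow_mul_exp_neg_mul_sq (b := 1/2) (by norm_num) (s := 2) (by norm_num)
  refine h.congr ?_
  filter_upwards with x
  rw [show ((2:ℝ) = ((2:ℕ):ℝ)) by norm_num, Real.rpow_natCast]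

lemma tend_x_exp : Tendsto (fun x : ℝ => x * Real.exp (-(1/2) * x ^ 2)) atTop (nhds 0) := by
  have h := rpow_mul_exp_neg_mul_sq_isLittleO_exp_neg (b := 1/2) (by norm_num) 1
  have h2 : Tendsto (fun x : ℝ => Real.exp (-(1/2) * x)) atTop (nhds 0) := by
    apply Real.tendsto_exp_atBot.comp
    apply Tendsto.const_mul_atTop_of_neg (by norm_num) tendsto_id
  have h3 := h.tendsto_zero_of_tendsto h2
  simpa [Real.rpow_one] using h3

lemma gauss_sq_integral : ∫ x : ℝ, x ^ 2 * Real.exp (-(1/2) * x ^ 2) = Real.sqrt (2 * Real.pi) := by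
  have hderiv : ∀ x : ℝ, HasDerivAt (fun x : ℝ => -(x * Real.exp (-(1/2) * x ^ 2)))
      (x ^ 2 * Real.exp (-(1/2) * x ^ 2) - Real.exp (-(1/2) * x ^ 2)) x := by
    intro x
    have h1 : HasDerivAt (fun x : ℝ => Real.exp (-(1/2) * x ^ 2))
        (Real.exp (-(1/2) * x ^ 2) * (-(1/2) * (2 * x ^ 1))) x :=
      (((hasDerivAt_pow 2 x).const_mul (-(1/2:ℝ)))).exp
    have h2 := ((hasDerivAt_id x).mul h1).neg
    refine h2.congr_deriv ?_
    simp only [id_eq]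
    ring
  have hint : Integrable (fun x : ℝ => x ^ 2 * Real.exp (-(1/2) * x ^ 2) - Real.exp (-(1/2) * x ^ 2)) :=
    integrable_sq_gauss.sub (integrable_exp_neg_mul_sq (by norm_num))
  have htop : Tendsto (fun x : ℝ => -(x * Real.exp (-(1/2) * x ^ 2))) atTop (nhds 0) := by
    simpa using tend_x_exp.neg
  have hbot : Tendsto (fun x : ℝ => -(x * Real.exp (-(1/2) * x ^ 2))) atBot (nhds 0) := by
    have h := tend_x_exp.comp tendsto_neg_atBot_atTop
    refine h.congr fun x => ?_
    simp [Function.comp, neg_sq]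
  have key := integral_of_hasDerivAt_of_tendsto hderiv hint hbot htop
  rw [sub_zero] at key
  have hsplit := integral_sub integrable_sq_gauss (integrable_exp_neg_mul_sq (b := 1/2) (by norm_num))
  rw [key] at hsplit
  have hg := integral_gaussian (1/2 : ℝ)
  have : Real.sqrt (Real.pi / (1/2)) = Real.sqrt (2 * Real.pi) := by
    congr 1; ring
  rw [hg, this] at hsplit
  linarith

lemma stdGauss_eq (z : ℝ) : stdGauss z * z ^ 2 =
    (Real.sqrt (2 * Real.pi))⁻¹ * (z ^ 2 * Real.exp (-(1/2) * z ^ 2)) := by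
  unfold stdGauss
  rw [show -z ^ 2 / 2 = -(1/2) * z ^ 2 by ring]
  ring

lemma integrable_A : Integrable (fun z : ℝ => stdGauss z * z ^ 2) := by
  simp only [stdGauss_eq]
  exact integrable_sq_gauss.const_mul _

lemma integral_A : ∫ z : ℝ, stdGauss z * z ^ 2 = 1 := by
  simp only [stdGauss_eq]
  rw [integral_const_mul, gauss_sq_integral]
  rw [inv_mul_cancel₀]
  positivity

lemma integrable_H : Integrable (fun z : ℝ => |z| ^ (-(1:ℝ)/2) * Real.exp (-(1/2) * z ^ 2)) := by
  have h1 : Integrable (fun z : ℝ => z ^ (-(1:ℝ)/2) * Real.exp (-(1/2) * z ^ 2)) :=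
    integrable_rpow_mul_exp_neg_mul_sq (by norm_num) (by norm_num)
  have h2 : Integrable (fun z : ℝ => (-z) ^ (-(1:ℝ)/2) * Real.exp (-(1/2) * z ^ 2)) := by
    have := h1.comp_neg
    refine this.congr ?_
    filter_upwards with z
    simp [neg_sq]
  have h3 := h1.add h2
  refine h3.congr ?_
  filter_upwards with z
  rcases lt_trichotomy z 0 with hz | hz | hz
  · have e1 : z ^ (-(1:ℝ)/2) = 0 := by
      rw [Real.rpow_def_of_neg hz]
      rw [show (-(1:ℝ)/2) * Real.pi = -(Real.pi/2) by ring, Real.cos_neg, Real.cos_pi_div_two]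
      ring
    simp only [Pi.add_apply]
    rw [e1, abs_of_neg hz]
    ring
  · simp only [Pi.add_apply, hz]
    simp [Real.zero_rpow (by norm_num : (-(1:ℝ)/2) ≠ 0)]
  · have e2 : (-z) ^ (-(1:ℝ)/2) = 0 := by
      rw [Real.rpow_def_of_neg (by linarith)]
      rw [show (-(1:ℝ)/2) * Real.pi = -(Real.pi/2) by ring, Real.cos_neg, Real.cos_pi_div_two]
      ring
    simp only [Pi.add_apply]
    rw [e2, abs_of_pos hz]
    ring

lemma stdGauss_le (z : ℝ) : stdGauss z ≤ Real.exp (-(1/2) * z ^ 2) := by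
  unfold stdGauss
  rw [show -z ^ 2 / 2 = -(1/2) * z ^ 2 by ring]
  apply div_le_self (Real.exp_pos _).le
  rw [show (1:ℝ) = Real.sqrt 1 by simp]
  apply Real.sqrt_le_sqrt
  nlinarith [Real.pi_gt_three]

lemma frac_le_sqrt {ρ g : ℝ} (hρ0 : 0 < ρ) (hg : 0 < g) :
    g / (g + ρ) ≤ Real.sqrt (g / ρ) := by
  rcases le_total g ρ with h | h
  · have h1 : g / (g + ρ) ≤ g / ρ := by
      apply div_le_div_of_nonneg_left hg.le hρ0
      linarith
    refine h1.trans ?_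
    have hs : (0:ℝ) ≤ g/ρ := by positivity
    have hs1 : g/ρ ≤ 1 := by rw [div_le_one hρ0]; exact h
    calc g/ρ = Real.sqrt ((g/ρ)^2) := (Real.sqrt_sq hs).symm
      _ ≤ Real.sqrt (g/ρ) := Real.sqrt_le_sqrt (by nlinarith)
  · have h1 : g / (g + ρ) ≤ 1 := by
      rw [div_le_one (by linarith)]; linarith
    refine h1.trans ?_
    rw [show (1:ℝ) = Real.sqrt 1 by simp]
    apply Real.sqrt_le_sqrt
    rw [le_div_iff₀ hρ0]; linarith

lemma sqrt_gA {ρ : ℝ} (hρ0 : 0 < ρ) (hρ1 : ρ < 1) {mh : ℝ} (hmh : 0 < mh) (z : ℝ) :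
    Real.sqrt (gA ρ mh z / ρ) =
      Real.sqrt ((1-ρ)/ρ) * (1 + mh) ^ ((1:ℝ)/4) * Real.exp (-(mh/4) * z ^ 2) := by
  unfold gA
  have h1 : (0:ℝ) ≤ (1-ρ)/ρ := div_nonneg (by linarith) hρ0.le
  have h2 : (0:ℝ) ≤ (1 + mh) ^ ((1:ℝ)/2) := (Real.rpow_pos_of_pos (by linarith) _).le
  rw [show (1 - ρ) * (1 + mh) ^ ((1:ℝ)/2) * Real.exp (-(mh/2) * z ^ 2) / ρ
      = ((1-ρ)/ρ) * ((1 + mh) ^ ((1:ℝ)/2) * Real.exp (-(mh/2) * z ^ 2)) by ring]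
  rw [Real.sqrt_mul h1, Real.sqrt_mul h2, mul_assoc]
  congr 1
  congr 1
  · rw [Real.sqrt_eq_rpow, ← Real.rpow_mul (by linarith : (0:ℝ) ≤ 1 + mh)]
    norm_num
  · rw [← Real.exp_half]
    congr 1
    ring

lemma bound_main {ρ : ℝ} (hρ0 : 0 < ρ) (hρ1 : ρ < 1) {mh z : ℝ} (hmh : 1 ≤ mh) (hz : z ≠ 0) :
    stdGauss z * z ^ 2 * (mh * (gA ρ mh z / (gA ρ mh z + ρ))) ≤
      8 * 4 ^ ((5:ℝ)/4) * Real.sqrt ((1-ρ)/ρ) *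
        (|z| ^ (-(1:ℝ)/2) * Real.exp (-(1/2) * z ^ 2)) := by
  have hmh0 : (0:ℝ) < mh := by linarith
  have hg := gA_pos hρ1 hmh0 z
  have hz2 : (0:ℝ) < z ^ 2 := pow_two_pos_of_ne_zero hz
  have hzabs : (0:ℝ) < |z| := abs_pos.mpr hz
  have hA : (0:ℝ) ≤ stdGauss z * z ^ 2 := mul_nonneg (stdGauss_pos z).le (sq_nonneg z)
  -- step 3
  have e3 : mh * (1 + mh) ^ ((1:ℝ)/4) ≤ 2 * mh ^ ((5:ℝ)/4) := by
    have e31 : (1+mh) ^ ((1:ℝ)/4) ≤ (2*mh) ^ ((1:ℝ)/4) :=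
      Real.rpow_le_rpow (by linarith) (by linarith) (by norm_num)
    have e32 : (2*mh) ^ ((1:ℝ)/4) = 2 ^ ((1:ℝ)/4) * mh ^ ((1:ℝ)/4) :=
      Real.mul_rpow (by norm_num) (by linarith)
    have e33 : (2:ℝ) ^ ((1:ℝ)/4) ≤ 2 := by
      nth_rewrite 2 [← Real.rpow_one 2]
      exact Real.rpow_le_rpow_of_exponent_le one_le_two (by norm_num)
    have e34 : mh * mh ^ ((1:ℝ)/4) = mh ^ ((5:ℝ)/4) := by
      nth_rewrite 1 [← Real.rpow_one mh]
      rw [← Real.rpow_add hmh0]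
      norm_num
    calc mh * (1+mh) ^ ((1:ℝ)/4) ≤ mh * ((2:ℝ) ^ ((1:ℝ)/4) * mh ^ ((1:ℝ)/4)) := by
          rw [← e32]; exact mul_le_mul_of_nonneg_left e31 hmh0.le
      _ ≤ mh * (2 * mh ^ ((1:ℝ)/4)) := by
          have : (0:ℝ) ≤ mh ^ ((1:ℝ)/4) := (Real.rpow_pos_of_pos hmh0 _).le
          apply mul_le_mul_of_nonneg_left _ hmh0.le
          exact mul_le_mul_of_nonneg_right e33 this
      _ = 2 * (mh * mh ^ ((1:ℝ)/4)) := by ring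
      _ = 2 * mh ^ ((5:ℝ)/4) := by rw [e34]
  -- step 4
  have e4 : mh ^ ((5:ℝ)/4) * Real.exp (-(mh/4) * z ^ 2) ≤ 4 * (4 * (z^2)⁻¹) ^ ((5:ℝ)/4) := by
    have hu : (0:ℝ) < mh * z ^ 2 / 4 := by positivity
    have e5 : mh = (4 * (z^2)⁻¹) * (mh * z ^ 2 / 4) := by field_simp
    have e6 : mh ^ ((5:ℝ)/4)
        = (4 * (z^2)⁻¹) ^ ((5:ℝ)/4) * (mh * z ^ 2 / 4) ^ ((5:ℝ)/4) := by
      nth_rewrite 1 [e5]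
      exact Real.mul_rpow (by positivity) hu.le
    have e7 : Real.exp (-(mh/4) * z ^ 2) = Real.exp (-(mh * z ^ 2 / 4)) := by
      congr 1; ring
    rw [e6, e7, mul_assoc]
    rw [mul_comm (4:ℝ) ((4 * (z^2)⁻¹) ^ ((5:ℝ)/4))]
    apply mul_le_mul_of_nonneg_left _ (by positivity)
    exact u54 _ hu.le
  -- step 5
  have e8 : (4 * (z^2)⁻¹) ^ ((5:ℝ)/4) * z ^ 2 = 4 ^ ((5:ℝ)/4) * |z| ^ (-(1:ℝ)/2) := by
    have hz2abs : z ^ 2 = |z| ^ ((2:ℕ):ℝ) := by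
      rw [Real.rpow_natCast, sq_abs]
    have hinv : (z ^ 2)⁻¹ = |z| ^ (-((2:ℕ):ℝ)) := by
      rw [Real.rpow_neg (abs_nonneg z), ← hz2abs]
    rw [hinv, Real.mul_rpow (by norm_num) (Real.rpow_nonneg (abs_nonneg z) _)]
    rw [← Real.rpow_mul (abs_nonneg z), mul_assoc, hz2abs, ← Real.rpow_add hzabs]
    norm_num
  -- assembly
  calc stdGauss z * z ^ 2 * (mh * (gA ρ mh z / (gA ρ mh z + ρ)))
      ≤ stdGauss z * z ^ 2 * (mh * Real.sqrt (gA ρ mh z / ρ)) := by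
        apply mul_le_mul_of_nonneg_left _ hA
        exact mul_le_mul_of_nonneg_left (frac_le_sqrt hρ0 hg) hmh0.le
    _ = stdGauss z * z ^ 2 *
        (Real.sqrt ((1-ρ)/ρ) * (mh * (1 + mh) ^ ((1:ℝ)/4)) * Real.exp (-(mh/4) * z ^ 2)) := by
        rw [sqrt_gA hρ0 hρ1 hmh0]; ring
    _ ≤ stdGauss z * z ^ 2 *
        (Real.sqrt ((1-ρ)/ρ) * (2 * mh ^ ((5:ℝ)/4)) * Real.exp (-(mh/4) * z ^ 2)) := by
        apply mul_le_mul_of_nonneg_left _ hA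
        apply mul_le_mul_of_nonneg_right _ (Real.exp_pos _).le
        exact mul_le_mul_of_nonneg_left e3 (Real.sqrt_nonneg _)
    _ = 2 * Real.sqrt ((1-ρ)/ρ) * (stdGauss z * z ^ 2) *
          (mh ^ ((5:ℝ)/4) * Real.exp (-(mh/4) * z ^ 2)) := by ring
    _ ≤ 2 * Real.sqrt ((1-ρ)/ρ) * (stdGauss z * z ^ 2) * (4 * (4 * (z^2)⁻¹) ^ ((5:ℝ)/4)) := by
        apply mul_le_mul_of_nonneg_left e4 (by positivity)
    _ = 8 * Real.sqrt ((1-ρ)/ρ) * stdGauss z * ((4 * (z^2)⁻¹) ^ ((5:ℝ)/4) * z ^ 2) := by ring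
    _ = 8 * Real.sqrt ((1-ρ)/ρ) * stdGauss z * (4 ^ ((5:ℝ)/4) * |z| ^ (-(1:ℝ)/2)) := by rw [e8]
    _ ≤ 8 * Real.sqrt ((1-ρ)/ρ) * Real.exp (-(1/2) * z ^ 2) * (4 ^ ((5:ℝ)/4) * |z| ^ (-(1:ℝ)/2)) := by
        apply mul_le_mul_of_nonneg_right _ (by positivity)
        apply mul_le_mul_of_nonneg_left (stdGauss_le z) (by positivity)
    _ = 8 * 4 ^ ((5:ℝ)/4) * Real.sqrt ((1-ρ)/ρ) *
        (|z| ^ (-(1:ℝ)/2) * Real.exp (-(1/2) * z ^ 2)) := by ring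

lemma limit_main {ρ : ℝ} (hρ0 : 0 < ρ) (hρ1 : ρ < 1) {z : ℝ} (hz : z ≠ 0) :
    Tendsto (fun mh => stdGauss z * z ^ 2 * (mh * (gA ρ mh z / (gA ρ mh z + ρ))))
      atTop (nhds 0) := by
  have hz2 : (0:ℝ) < z ^ 2 := pow_two_pos_of_ne_zero hz
  have ha : (0:ℝ) < z ^ 2 / 2 := by positivity
  have htend : Tendsto (fun mh : ℝ => (1+mh) ^ 2 * Real.exp (-(mh/2) * z ^ 2)) atTop (nhds 0) := by
    have h0 := tendsto_rpow_mul_exp_neg_mul_atTop_nhds_zero 2 (z ^ 2 / 2) ha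
    have hcomp := h0.comp (tendsto_atTop_add_const_left atTop 1 tendsto_id)
    have h1 := hcomp.const_mul (Real.exp (z ^ 2 / 2))
    rw [mul_zero] at h1
    refine h1.congr fun mh => ?_
    simp only [Function.comp, id_eq]
    rw [← mul_assoc, mul_comm (Real.exp (z^2/2)), mul_assoc, ← Real.exp_add]
    have e : ((1:ℝ)+mh) ^ (2:ℝ) = ((1:ℝ)+mh) ^ (2:ℕ) := by norm_cast
    rw [e]
    congr 2
    ring
  apply squeeze_zero' (g := fun mh => (stdGauss z * z ^ 2 * ((1-ρ)/ρ)) * ((1+mh) ^ 2 * Real.exp (-(mh/2) * z ^ 2)))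
  · filter_upwards [eventually_ge_atTop (1:ℝ)] with mh hmh
    have hg := gA_pos hρ1 (by linarith : (0:ℝ) < mh) z
    have : (0:ℝ) ≤ mh * (gA ρ mh z / (gA ρ mh z + ρ)) := by positivity
    exact mul_nonneg (mul_nonneg (stdGauss_pos z).le (sq_nonneg z)) this
  · filter_upwards [eventually_ge_atTop (1:ℝ)] with mh hmh
    have hmh0 : (0:ℝ) < mh := by linarith
    have hg := gA_pos hρ1 hmh0 z
    have hA : (0:ℝ) ≤ stdGauss z * z ^ 2 := mul_nonneg (stdGauss_pos z).le (sq_nonneg z)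
    have step1 : gA ρ mh z / (gA ρ mh z + ρ) ≤ gA ρ mh z / ρ :=
      div_le_div_of_nonneg_left hg.le hρ0 (by linarith)
    have step2 : (1+mh) ^ ((1:ℝ)/2) ≤ 1 + mh := by
      nth_rewrite 2 [← Real.rpow_one (1+mh)]
      exact Real.rpow_le_rpow_of_exponent_le (by linarith) (by norm_num)
    calc stdGauss z * z ^ 2 * (mh * (gA ρ mh z / (gA ρ mh z + ρ)))
        ≤ stdGauss z * z ^ 2 * (mh * (gA ρ mh z / ρ)) := by
          apply mul_le_mul_of_nonneg_left _ hA
          exact mul_le_mul_of_nonneg_left step1 hmh0.le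
      _ = stdGauss z * z ^ 2 * ((1-ρ)/ρ) *
            ((mh * (1+mh) ^ ((1:ℝ)/2)) * Real.exp (-(mh/2) * z ^ 2)) := by
          unfold gA; ring
      _ ≤ stdGauss z * z ^ 2 * ((1-ρ)/ρ) *
            (((1+mh) * (1+mh)) * Real.exp (-(mh/2) * z ^ 2)) := by
          have hpre : (0:ℝ) ≤ stdGauss z * z ^ 2 * ((1-ρ)/ρ) := by
            apply mul_nonneg hA
            apply div_nonneg (by linarith) hρ0.le
          apply mul_le_mul_of_nonneg_left _ hpre
          apply mul_le_mul_of_nonneg_right _ (Real.exp_pos _).le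
          apply mul_le_mul (by linarith) step2 (Real.rpow_nonneg (by linarith) _) (by linarith)
      _ = stdGauss z * z ^ 2 * ((1-ρ)/ρ) * ((1+mh) ^ 2 * Real.exp (-(mh/2) * z ^ 2)) := by
          ring
  · simpa using htend.const_mul (stdGauss z * z ^ 2 * ((1-ρ)/ρ))

lemma K_tendsto {ρ : ℝ} (hρ0 : 0 < ρ) (hρ1 : ρ < 1) :
    Tendsto (fun mh => ∫ z : ℝ, stdGauss z * z ^ 2 * (mh * (gA ρ mh z / (gA ρ mh z + ρ))))
      atTop (nhds 0) := by
  have hne : ∀ᵐ z : ℝ, z ≠ (0:ℝ) := by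
    refine ae_iff.mpr ?_
    simp only [ne_eq, not_not, Set.setOf_eq_eq_singleton]
    exact measure_singleton 0
  have := tendsto_integral_filter_of_dominated_convergence
    (μ := volume) (F := fun mh (z : ℝ) => stdGauss z * z ^ 2 * (mh * (gA ρ mh z / (gA ρ mh z + ρ))))
    (f := fun _ => (0:ℝ)) (l := atTop)
    (bound := fun z => 8 * 4 ^ ((5:ℝ)/4) * Real.sqrt ((1-ρ)/ρ) *
        (|z| ^ (-(1:ℝ)/2) * Real.exp (-(1/2) * z ^ 2)))
    ?_ ?_ ?_ ?_
  · simpa using this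
  · filter_upwards [eventually_ge_atTop (1:ℝ)] with mh hmh
    apply Continuous.aestronglyMeasurable
    have hcont : Continuous (fun z => gA ρ mh z / (gA ρ mh z + ρ)) := by
      apply (continuous_gA ρ mh).div ((continuous_gA ρ mh).add continuous_const)
      intro z
      have := gA_pos hρ1 (by linarith : (0:ℝ) < mh) z
      exact (add_pos this hρ0).ne'
    exact ((continuous_stdGauss.mul (continuous_pow 2)).mul (continuous_const.mul hcont))
  · filter_upwards [eventually_ge_atTop (1:ℝ)] with mh hmh
    filter_upwards [hne] with z hz
    have hmh0 : (0:ℝ) < mh := by linarith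
    have hg := gA_pos hρ1 hmh0 z
    have hnn : (0:ℝ) ≤ stdGauss z * z ^ 2 * (mh * (gA ρ mh z / (gA ρ mh z + ρ))) := by
      have h1 : (0:ℝ) ≤ mh * (gA ρ mh z / (gA ρ mh z + ρ)) := by positivity
      exact mul_nonneg (mul_nonneg (stdGauss_pos z).le (sq_nonneg z)) h1
    rw [Real.norm_eq_abs, abs_of_nonneg hnn]
    exact bound_main hρ0 hρ1 hmh hz
  · exact (integrable_H.const_mul _)
  · filter_upwards [hne] with z hz
    exact limit_main hρ0 hρ1 hz

/-- asymptotics of the Bayes-optimal overlap: m̂(ρ − m(m̂)) → ρ as m̂ → ∞,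
i.e. m(m̂) = ρ(1 − m̂⁻¹) + o(m̂⁻¹). -/
theorem overlap_asymptotics (ρ : ℝ) (hρ0 : 0 < ρ) (hρ1 : ρ < 1)
    (m : ℝ → ℝ)
    (hm : ∀ mh : ℝ, 0 < mh → m mh = (ρ ^ 2 * mh / (1 + mh)) *
      ∫ z : ℝ, stdGauss z * (z ^ 2 *
        ((1 - ρ) * (1 + mh) ^ ((1 : ℝ) / 2) * Real.exp (-(mh / 2) * z ^ 2) + ρ)⁻¹)) :
    Tendsto (fun mh => mh * (ρ - m mh)) atTop (nhds ρ) := by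
  have hgrw : ∀ mh z : ℝ, (1 - ρ) * (1 + mh) ^ ((1 : ℝ) / 2) * Real.exp (-(mh / 2) * z ^ 2)
      = gA ρ mh z := fun _ _ => rfl
  -- the remainder integral
  set K : ℝ → ℝ := fun mh => ∫ z : ℝ, stdGauss z * z ^ 2 * (mh * (gA ρ mh z / (gA ρ mh z + ρ)))
    with hK_def
  have hK : Tendsto K atTop (nhds 0) := K_tendsto hρ0 hρ1
  -- key identity
  have key : ∀ mh : ℝ, 0 < mh →
      mh * (ρ - m mh) = ρ * (mh * (1 + mh)⁻¹) * (1 + K mh) := by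
    intro mh hmh
    have h1mh : (0:ℝ) < 1 + mh := by linarith
    have hAq : Integrable (fun z : ℝ => stdGauss z * z ^ 2 * (gA ρ mh z / (gA ρ mh z + ρ))) := by
      apply Integrable.mono' integrable_A
      · apply Continuous.aestronglyMeasurable
        apply (continuous_stdGauss.mul (continuous_pow 2)).mul
        apply (continuous_gA ρ mh).div ((continuous_gA ρ mh).add continuous_const)
        intro z
        have := gA_pos hρ1 hmh z
        exact (add_pos this hρ0).ne'
      · filter_upwards with z
        have hg := gA_pos hρ1 hmh z
        have hq1 : gA ρ mh z / (gA ρ mh z + ρ) ≤ 1 := by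
          rw [div_le_one (by linarith)]; linarith
        have hnn : (0:ℝ) ≤ stdGauss z * z ^ 2 * (gA ρ mh z / (gA ρ mh z + ρ)) := by
          have : (0:ℝ) ≤ gA ρ mh z / (gA ρ mh z + ρ) := by positivity
          exact mul_nonneg (mul_nonneg (stdGauss_pos z).le (sq_nonneg z)) this
        rw [Real.norm_eq_abs, abs_of_nonneg hnn]
        calc stdGauss z * z ^ 2 * (gA ρ mh z / (gA ρ mh z + ρ))
            ≤ stdGauss z * z ^ 2 * 1 := by
              apply mul_le_mul_of_nonneg_left hq1
              exact mul_nonneg (stdGauss_pos z).le (sq_nonneg z)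
          _ = stdGauss z * z ^ 2 := by ring
    -- split the integrand
    have hsplit : (fun z : ℝ => stdGauss z * (z ^ 2 * (gA ρ mh z + ρ)⁻¹))
        = fun z : ℝ => ρ⁻¹ * (stdGauss z * z ^ 2)
            - ρ⁻¹ * (stdGauss z * z ^ 2 * (gA ρ mh z / (gA ρ mh z + ρ))) := by
      funext z
      have hg := gA_pos hρ1 hmh z
      have hgρ : gA ρ mh z + ρ ≠ 0 := by positivity
      field_simp
      ring
    have hI : (∫ z : ℝ, stdGauss z * (z ^ 2 * (gA ρ mh z + ρ)⁻¹))
        = ρ⁻¹ - ρ⁻¹ * ∫ z : ℝ, stdGauss z * z ^ 2 * (gA ρ mh z / (gA ρ mh z + ρ)) := by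
      rw [hsplit, integral_sub (integrable_A.const_mul _) (hAq.const_mul _),
        integral_const_mul, integral_const_mul, integral_A, mul_one]
    have hKmh : K mh = mh * ∫ z : ℝ, stdGauss z * z ^ 2 * (gA ρ mh z / (gA ρ mh z + ρ)) := by
      show (∫ z : ℝ, stdGauss z * z ^ 2 * (mh * (gA ρ mh z / (gA ρ mh z + ρ)))) = _
      rw [← integral_const_mul]
      congr 1
      funext z
      ring
    have hmmh := hm mh hmh
    simp only [hgrw] at hmmh
    rw [hmmh, hI, hKmh]
    field_simp
    ring
  -- conclude
  have h1 : Tendsto (fun mh : ℝ => mh * (1 + mh)⁻¹) atTop (nhds 1) := by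
    have h0 : Tendsto (fun mh : ℝ => (1 + mh)⁻¹) atTop (nhds 0) := by
      apply tendsto_inv_atTop_zero.comp
      exact tendsto_atTop_add_const_left atTop 1 tendsto_id
    have h2 : Tendsto (fun mh : ℝ => 1 - (1 + mh)⁻¹) atTop (nhds ((1:ℝ) - 0)) :=
      tendsto_const_nhds.sub h0
    rw [sub_zero] at h2
    apply h2.congr'
    filter_upwards [eventually_gt_atTop (0:ℝ)] with mh hmh
    have : (1:ℝ) + mh ≠ 0 := by linarith
    field_simp
    ring
  have hfin : Tendsto (fun mh : ℝ => ρ * (mh * (1 + mh)⁻¹) * (1 + K mh)) atTop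
      (nhds (ρ * 1 * (1 + 0))) :=
    ((tendsto_const_nhds.mul h1).mul (tendsto_const_nhds.add hK))
  have := hfin.congr' (by
    filter_upwards [eventually_gt_atTop (0:ℝ)] with mh hmh
    exact (key mh hmh).symm)
  simpa using this
end

section
/- Suppose m(α) satisfies m = ρ(1 − m̂^{−1}) and m̂ = 2Cα/√(m(ρ−m)) asymptotically as α → ∞, with constants ρ ∈ (0,1) and C > 0. Then ρ − m(α) ~ ρ³/(4C²α²), and consequently MSE = 2(1 − √(m/ρ)) ~ ρ²/(4C²α²) as α → ∞. -/
open Real Filter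

/-- from m = ρ(1 − m̂⁻¹) and m̂ = 2Cα/√(m(ρ−m)) asymptotically,
ρ − m(α) ~ ρ³/(4C²α²) and MSE = 2(1 − √(m/ρ)) ~ ρ²/(4C²α²) as α → ∞. -/
theorem mse_asymptotics (ρ C : ℝ) (hρ0 : 0 < ρ) (hρ1 : ρ < 1) (hC : 0 < C)
    (m mh : ℝ → ℝ)
    (hrange : ∀ᶠ α in atTop, 0 < m α ∧ m α < ρ)
    (hm : ∀ᶠ α in atTop, m α = ρ * (1 - (mh α)⁻¹))
    (hmh : ∀ᶠ α in atTop, mh α = 2 * C * α / Real.sqrt (m α * (ρ - m α))) :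
    Tendsto (fun α => (ρ - m α) / (ρ ^ 3 / (4 * C ^ 2 * α ^ 2))) atTop (nhds 1) ∧
    Tendsto (fun α => (2 * (1 - Real.sqrt (m α / ρ))) / (ρ ^ 2 / (4 * C ^ 2 * α ^ 2)))
      atTop (nhds 1) := by
  have hpos : ∀ᶠ α : ℝ in atTop, (0:ℝ) < α := eventually_gt_atTop 0
  have key : ∀ᶠ α in atTop, 0 < α ∧ 0 < m α ∧ m α < ρ ∧
      ρ - m α = ρ^2 * m α / (4 * C^2 * α^2) := by
    filter_upwards [hpos, hrange, hm, hmh] with α hα hr heq hmheq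
    obtain ⟨hm0, hmρ⟩ := hr
    refine ⟨hα, hm0, hmρ, ?_⟩
    have hd0 : 0 < ρ - m α := by linarith
    set s := Real.sqrt (m α * (ρ - m α)) with hs
    have hs0 : 0 < s := Real.sqrt_pos.mpr (by positivity)
    have hs2 : s^2 = m α * (ρ - m α) := Real.sq_sqrt (by positivity)
    have hstep : ρ - m α = ρ * s / (2 * C * α) := by
      rw [heq, hmheq]
      field_simp
      ring
    have hsq : (ρ - m α) * (ρ - m α) = (ρ^2 * m α / (4 * C^2 * α^2)) * (ρ - m α) := by
      have h2 : (ρ - m α)^2 = ρ^2 * s^2 / (4 * C^2 * α^2) := by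
        rw [hstep]; field_simp; ring
      rw [hs2] at h2
      rw [← sq, h2]; ring
    exact mul_right_cancel₀ hd0.ne' hsq
  have hto0 : Tendsto (fun α : ℝ => ρ^3 / (4 * C^2 * α^2)) atTop (nhds 0) := by
    apply Tendsto.div_atTop tendsto_const_nhds
    exact (tendsto_pow_atTop (two_ne_zero)).const_mul_atTop (by positivity)
  have hdto0 : Tendsto (fun α => ρ - m α) atTop (nhds 0) := by
    apply squeeze_zero' (g := fun α : ℝ => ρ^3 / (4 * C^2 * α^2))
    · filter_upwards [key] with α ⟨_, _, h2, _⟩; linarith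
    · filter_upwards [key] with α ⟨hα, h1, h2, h3⟩
      rw [h3]
      apply div_le_div_of_nonneg_right ?_ (by positivity)
      · nlinarith
    · exact hto0
  have hmρ : Tendsto m atTop (nhds ρ) := by
    have := tendsto_const_nhds (x := ρ) (f := atTop (α := ℝ)) |>.sub hdto0
    simpa using this
  have ht : Tendsto (fun α => m α / ρ) atTop (nhds 1) := by
    have := hmρ.div_const ρ
    rwa [div_self hρ0.ne'] at this
  constructor
  · apply Tendsto.congr' ?_ ht
    filter_upwards [key] with α ⟨hα, h1, h2, h3⟩
    rw [h3]
    field_simp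
  · have hsqrt : Tendsto (fun α => Real.sqrt (m α / ρ)) atTop (nhds 1) := by
      have := (Real.continuous_sqrt.tendsto 1).comp ht
      simpa [Function.comp_def] using this
    have hlim : Tendsto (fun α => 2 * (m α / ρ) / (1 + Real.sqrt (m α / ρ)))
        atTop (nhds 1) := by
      have hnum : Tendsto (fun α => 2 * (m α / ρ)) atTop (nhds 2) := by
        have := ht.const_mul 2; simpa using this
      have hden : Tendsto (fun α => 1 + Real.sqrt (m α / ρ)) atTop (nhds 2) := by
        have := (tendsto_const_nhds (x := (1:ℝ)) (f := atTop (α := ℝ))).add hsqrt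
        norm_num at this; exact this
      have := hnum.div hden (by norm_num)
      norm_num at this; exact this
    apply Tendsto.congr' ?_ hlim
    filter_upwards [key] with α ⟨hα, h1, h2, h3⟩
    set u := Real.sqrt (m α / ρ) with hu
    have hu0 : 0 ≤ u := Real.sqrt_nonneg _
    have hu2 : u^2 = m α / ρ := Real.sq_sqrt (by positivity)
    have h1u : (0:ℝ) < 1 + u := by linarith
    have h3' : (ρ - m α) * (4 * C^2 * α^2) = ρ^2 * m α := by
      rw [h3]; field_simp
    have hlin : (1 - u) * (1 + u) * (4 * C^2 * α^2) = ρ * m α := by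
      have hq : (1 - u) * (1 + u) = 1 - m α / ρ := by rw [← hu2]; ring
      rw [hq]; field_simp
      linear_combination h3'
    field_simp
    linear_combination (-1) * hlin
end
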